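/- Let A, B be C*-algebras, B unital, and x = Σ_{i=1}^n x_i ⊗ b_i ∈ B(H_A) ⊗ B with b_1,…,b_n linearly independent in B. If x lies in the multiplier algebra M(A ⊗ B) (acting on H_A ⊗ H_B via faithful nondegenerate representations), then each x_i lies in M(A); in particular x ∈ M(A) ⊗ B. -/

import Mathlib

open scoped InnerProductSpace

/-- A realization of the Hilbert space tensor product `H12 = H1 ⊗ H2`:
a continuous bilinear map `tmul` with the characteristic inner product identity and dense
span of elementary tensors, together with the amplification `omap x y = x ⊗ y` of pairs of
bounded operators, characterized by its action on elementary tensors. -/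
structure HilbertTensor (H1 H2 H12 : Type*)
    [NormedAddCommGroup H1] [InnerProductSpace ℂ H1] [CompleteSpace H1]
    [NormedAddCommGroup H2] [InnerProductSpace ℂ H2] [CompleteSpace H2]
    [NormedAddCommGroup H12] [InnerProductSpace ℂ H12] [CompleteSpace H12] where
  tmul : H1 →L[ℂ] H2 →L[ℂ] H12
  inner_tmul : ∀ (ξ ξ' : H1) (η η' : H2),
    (inner ℂ (tmul ξ η) (tmul ξ' η') : ℂ) = (inner ℂ ξ ξ' : ℂ) * (inner ℂ η η' : ℂ)
  dense_span : Dense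
    (↑(Submodule.span ℂ {z : H12 | ∃ ξ η, z = tmul ξ η}) : Set H12)
  omap : (H1 →L[ℂ] H1) → (H2 →L[ℂ] H2) → (H12 →L[ℂ] H12)
  omap_tmul : ∀ (x : H1 →L[ℂ] H1) (y : H2 →L[ℂ] H2) (ξ : H1) (η : H2),
    omap x y (tmul ξ η) = tmul (x ξ) (y η)

/-- The minimal (spatial) tensor product of two concrete operator spaces:
the norm closure of the linear span of elementary operator tensors. -/
def minTensor {H1 H2 H12 : Type*}
    [NormedAddCommGroup H1] [InnerProductSpace ℂ H1] [CompleteSpace H1]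
    [NormedAddCommGroup H2] [InnerProductSpace ℂ H2] [CompleteSpace H2]
    [NormedAddCommGroup H12] [InnerProductSpace ℂ H12] [CompleteSpace H12]
    (T : HilbertTensor H1 H2 H12)
    (SA : Set (H1 →L[ℂ] H1)) (SB : Set (H2 →L[ℂ] H2)) : Set (H12 →L[ℂ] H12) :=
  closure (↑(Submodule.span ℂ {z : H12 →L[ℂ] H12 | ∃ x ∈ SA, ∃ y ∈ SB, z = T.omap x y}))

/-- The multiplier algebra of a concrete nondegenerately acting C*-algebra `A ⊆ B(H)`,
realized as `{m ∈ B(H) : mA ⊆ A and Am ⊆ A}`. -/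
def multiplierSet {H : Type*} [NormedAddCommGroup H] [InnerProductSpace ℂ H]
    [CompleteSpace H] (A : Set (H →L[ℂ] H)) : Set (H →L[ℂ] H) :=
  {m | ∀ a ∈ A, m * a ∈ A ∧ a * m ∈ A}


section Aux

variable {HA HB HAB : Type*}
    [NormedAddCommGroup HA] [InnerProductSpace ℂ HA] [CompleteSpace HA]
    [NormedAddCommGroup HB] [InnerProductSpace ℂ HB] [CompleteSpace HB]
    [NormedAddCommGroup HAB] [InnerProductSpace ℂ HAB] [CompleteSpace HAB]
    (T : HilbertTensor HA HB HAB)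

/-- Right multiplication `ξ ↦ ξ ⊗ η`. -/
noncomputable def HilbertTensor.rmul (η : HB) : HA →L[ℂ] HAB := T.tmul.flip η

@[simp] lemma HilbertTensor.rmul_apply (η : HB) (ξ : HA) : T.rmul η ξ = T.tmul ξ η := rfl

/-- The slice map `z ↦ (R_{η'})* z R_η`. -/
noncomputable def HilbertTensor.slice (η η' : HB) :
    (HAB →L[ℂ] HAB) →L[ℂ] (HA →L[ℂ] HA) :=
  (ContinuousLinearMap.compL ℂ HA HAB HA (ContinuousLinearMap.adjoint (T.rmul η'))).comp
    ((ContinuousLinearMap.compL ℂ HA HAB HAB).flip (T.rmul η))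

lemma HilbertTensor.slice_apply (η η' : HB) (z : HAB →L[ℂ] HAB) (ξ : HA) :
    T.slice η η' z ξ = ContinuousLinearMap.adjoint (T.rmul η') (z (T.tmul ξ η)) := rfl

lemma HilbertTensor.slice_omap (η η' : HB) (x : HA →L[ℂ] HA) (y : HB →L[ℂ] HB) :
    T.slice η η' (T.omap x y) = (inner ℂ η' (y η) : ℂ) • x := by
  ext ξ
  apply ext_inner_left ℂ
  intro ξ'
  rw [HilbertTensor.slice_apply, ContinuousLinearMap.adjoint_inner_right, T.omap_tmul]
  simp only [HilbertTensor.rmul_apply, T.inner_tmul, ContinuousLinearMap.smul_apply,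
    inner_smul_right]
  ring

/-- Two bounded operators agreeing on elementary tensors agree. -/
lemma HilbertTensor.ext_tmul {S S' : HAB →L[ℂ] HAB}
    (h : ∀ ξ η, S (T.tmul ξ η) = S' (T.tmul ξ η)) : S = S' := by
  have heq : Set.EqOn S S'
      (↑(Submodule.span ℂ {z : HAB | ∃ ξ η, z = T.tmul ξ η}) : Set HAB) := by
    intro z hz
    induction hz using Submodule.span_induction with
    | mem w hw => obtain ⟨ξ, η, rfl⟩ := hw; exact h ξ η
    | zero => simp
    | add u v _ _ hu hv => simp only [map_add, hu, hv]
    | smul c u _ hu => simp only [map_smul, hu]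
  exact ContinuousLinearMap.coeFn_injective
    (S.continuous.ext_on T.dense_span S'.continuous heq)

lemma HilbertTensor.omap_mul (x x' : HA →L[ℂ] HA) (y y' : HB →L[ℂ] HB) :
    T.omap x y * T.omap x' y' = T.omap (x * x') (y * y') := by
  apply T.ext_tmul
  intro ξ η
  simp only [ContinuousLinearMap.mul_apply, T.omap_tmul]

/-- Slice maps carry the minimal tensor product of a closed subspace with anything
into the subspace. -/
lemma HilbertTensor.slice_mem (η η' : HB) {SA : Set (HA →L[ℂ] HA)}
    {SB : Set (HB →L[ℂ] HB)} (M : Submodule ℂ (HA →L[ℂ] HA))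
    (hMc : IsClosed (M : Set (HA →L[ℂ] HA))) (hSA : SA ⊆ (M : Set (HA →L[ℂ] HA)))
    {z : HAB →L[ℂ] HAB} (hz : z ∈ minTensor T SA SB) :
    T.slice η η' z ∈ M := by
  have h1 : Set.MapsTo (T.slice η η')
      (↑(Submodule.span ℂ {w : HAB →L[ℂ] HAB | ∃ x ∈ SA, ∃ y ∈ SB, w = T.omap x y}) :
        Set (HAB →L[ℂ] HAB)) (M : Set (HA →L[ℂ] HA)) := by
    intro w hw
    induction hw using Submodule.span_induction with
    | mem w hw =>
      obtain ⟨x, hx, y, hy, rfl⟩ := hw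
      rw [T.slice_omap]
      exact M.smul_mem _ (hSA hx)
    | zero => simpa using M.zero_mem
    | add u v _ _ hu hv => simpa [map_add] using M.add_mem hu hv
    | smul c u _ hu => simpa [map_smul] using M.smul_mem c hu
  have h2 := map_mem_closure (T.slice η η').continuous hz h1
  rwa [hMc.closure_eq] at h2

/-- Linear-algebra core: if `b i` are linearly independent and all "slices"
`∑ i, ⟪η', b i η⟫ • y i` lie in a subspace `M`, then each `y j` lies in `M`. -/
lemma slice_core {n : ℕ} (b : Fin n → (HB →L[ℂ] HB)) (hbli : LinearIndependent ℂ b)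
    (y : Fin n → (HA →L[ℂ] HA)) (M : Submodule ℂ (HA →L[ℂ] HA))
    (h : ∀ η η' : HB, (∑ i, (inner ℂ η' (b i η) : ℂ) • y i) ∈ M) : ∀ j, y j ∈ M := by
  classical
  set V : Submodule ℂ (HB →L[ℂ] HB) := Submodule.span ℂ (Set.range b) with hV
  haveI : FiniteDimensional ℂ V :=
    FiniteDimensional.span_of_finite ℂ (Set.finite_range b)
  let β : Module.Basis (Fin n) ℂ V := Module.Basis.span hbli
  have hmem : ∀ i, b i ∈ V := fun i => Submodule.subset_span (Set.mem_range_self i)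
  let F : HB × HB → Module.Dual ℂ V := fun p =>
    { toFun := fun v => (inner ℂ p.2 ((v : HB →L[ℂ] HB) p.1) : ℂ)
      map_add' := by intros; simp [inner_add_right]
      map_smul' := by intros; simp [inner_smul_right] }
  have hW : Submodule.span ℂ (Set.range F) = ⊤ := by
    set W := Submodule.span ℂ (Set.range F) with hWdef
    have hcoann : W.dualCoannihilator = ⊥ := by
      rw [eq_bot_iff]
      intro v hv
      rw [Submodule.mem_dualCoannihilator] at hv
      have hv0 : (v : HB →L[ℂ] HB) = 0 := by
        ext η
        apply ext_inner_left ℂ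
        intro η'
        have := hv (F (η, η')) (Submodule.subset_span ⟨(η, η'), rfl⟩)
        simpa [F] using this
      have : v = 0 := Subtype.ext hv0
      simp [this]
    have h1 := Subspace.finrank_add_finrank_dualCoannihilator_eq W
    rw [hcoann, finrank_bot, add_zero] at h1
    exact Submodule.eq_top_of_finrank_eq (by rw [h1, Subspace.dual_finrank_eq])
  let Θ : Module.Dual ℂ V →ₗ[ℂ] (HA →L[ℂ] HA) :=
    { toFun := fun φ => ∑ i, φ ⟨b i, hmem i⟩ • y i
      map_add' := by intros; simp [add_smul, Finset.sum_add_distrib]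
      map_smul' := by intros; simp [smul_smul, Finset.smul_sum] }
  have hrange : Set.range F ⊆ (M.comap Θ : Set (Module.Dual ℂ V)) := by
    rintro _ ⟨p, rfl⟩
    simpa [Θ, F] using h p.1 p.2
  have hle : Submodule.span ℂ (Set.range F) ≤ M.comap Θ :=
    Submodule.span_le.mpr hrange
  rw [hW] at hle
  intro j
  have hβ : Θ (β.coord j) ∈ M := hle Submodule.mem_top
  have hcoord : ∀ i, β.coord j (⟨b i, hmem i⟩ : V) = if i = j then 1 else 0 := by
    intro i
    have hb' : (⟨b i, hmem i⟩ : V) = β i := (Module.Basis.span_apply hbli i).symm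
    rw [hb', Module.Basis.coord_apply, Module.Basis.repr_self, Finsupp.single_apply]
  have hΘ : Θ (β.coord j) = y j := by
    simp only [Θ, LinearMap.coe_mk, AddHom.coe_mk]
    rw [Finset.sum_eq_single j]
    · rw [hcoord j, if_pos rfl, one_smul]
    · intro i _ hij
      rw [hcoord i, if_neg hij, zero_smul]
    · intro hj; exact absurd (Finset.mem_univ j) hj
  rwa [hΘ] at hβ

end Aux

/-- **Slice-map argument in the proof of Lemma 2.1.** Let `A`, `B` be C*-algebras, `B`
unital, faithfully (and for `A` nondegenerately) represented on `H_A`, `H_B`, and let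
`x = Σ_{i=1}^n x_i ⊗ b_i ∈ B(H_A) ⊗ B` with `b_1, …, b_n` linearly independent in `B`.
If `x` lies in the multiplier algebra `M(A ⊗ B)` of the minimal tensor product `A ⊗ B`,
then each `x_i` lies in `M(A)`; in particular `x ∈ M(A) ⊗ B`. -/
theorem finite_sum_multiplier_slice
    {HA HB HAB : Type*}
    [NormedAddCommGroup HA] [InnerProductSpace ℂ HA] [CompleteSpace HA]
    [NormedAddCommGroup HB] [InnerProductSpace ℂ HB] [CompleteSpace HB]
    [NormedAddCommGroup HAB] [InnerProductSpace ℂ HAB] [CompleteSpace HAB]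
    (T : HilbertTensor HA HB HAB)
    (A : NonUnitalStarSubalgebra ℂ (HA →L[ℂ] HA))
    (hAclosed : IsClosed (A : Set (HA →L[ℂ] HA)))
    (hAnondeg : (Submodule.span ℂ {v : HA | ∃ a ∈ A, ∃ ξ : HA, v = a ξ}).topologicalClosure = ⊤)
    (B : StarSubalgebra ℂ (HB →L[ℂ] HB))
    (hBclosed : IsClosed (B : Set (HB →L[ℂ] HB)))
    (n : ℕ) (x : Fin n → (HA →L[ℂ] HA)) (b : Fin n → (HB →L[ℂ] HB))
    (hb : ∀ i, b i ∈ B) (hbli : LinearIndependent ℂ b)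
    (hx : (∑ i, T.omap (x i) (b i)) ∈
      multiplierSet (minTensor T (A : Set (HA →L[ℂ] HA)) (B : Set (HB →L[ℂ] HB)))) :
    (∀ i, x i ∈ multiplierSet (A : Set (HA →L[ℂ] HA))) ∧
      (∑ i, T.omap (x i) (b i)) ∈
        minTensor T (multiplierSet (A : Set (HA →L[ℂ] HA))) (B : Set (HB →L[ℂ] HB)) := by
  classical
  -- `A` as a closed submodule
  let M : Submodule ℂ (HA →L[ℂ] HA) :=
    { carrier := (A : Set (HA →L[ℂ] HA))
      add_mem' := fun hu hv => add_mem hu hv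
      zero_mem' := zero_mem A
      smul_mem' := fun c u hu => SMulMemClass.smul_mem c hu }
  have hMA : ∀ u : HA →L[ℂ] HA, u ∈ M ↔ u ∈ A := fun u => Iff.rfl
  have key : ∀ i, x i ∈ multiplierSet (A : Set (HA →L[ℂ] HA)) := by
    intro j
    intro a ha
    -- `a ⊗ 1` belongs to the minimal tensor product
    have ha1 : T.omap a 1 ∈
        minTensor T (A : Set (HA →L[ℂ] HA)) (B : Set (HB →L[ℂ] HB)) :=
      subset_closure (Submodule.subset_span ⟨a, ha, 1, one_mem B, rfl⟩)
    have hm := hx (T.omap a 1) ha1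
    -- x * (a ⊗ 1) = ∑ (xᵢ a) ⊗ bᵢ
    have hXa : (∑ i, T.omap (x i) (b i)) * T.omap a 1
        = ∑ i, T.omap (x i * a) (b i) := by
      rw [Finset.sum_mul]
      refine Finset.sum_congr rfl fun i _ => ?_
      rw [T.omap_mul, mul_one]
    have haX : T.omap a 1 * (∑ i, T.omap (x i) (b i))
        = ∑ i, T.omap (a * x i) (b i) := by
      rw [Finset.mul_sum]
      refine Finset.sum_congr rfl fun i _ => ?_
      rw [T.omap_mul, one_mul]
    have hslice1 : ∀ η η' : HB,
        (∑ i, (inner ℂ η' (b i η) : ℂ) • (x i * a)) ∈ M := by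
      intro η η'
      have h1 : T.slice η η' ((∑ i, T.omap (x i) (b i)) * T.omap a 1) ∈ M :=
        T.slice_mem η η' M hAclosed (fun _ hu => hu) hm.1
      rwa [hXa, map_sum, Finset.sum_congr rfl
        (fun i _ => T.slice_omap η η' (x i * a) (b i))] at h1
    have hslice2 : ∀ η η' : HB,
        (∑ i, (inner ℂ η' (b i η) : ℂ) • (a * x i)) ∈ M := by
      intro η η'
      have h1 : T.slice η η' (T.omap a 1 * (∑ i, T.omap (x i) (b i))) ∈ M :=
        T.slice_mem η η' M hAclosed (fun _ hu => hu) hm.2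
      rwa [haX, map_sum, Finset.sum_congr rfl
        (fun i _ => T.slice_omap η η' (a * x i) (b i))] at h1
    exact ⟨slice_core b hbli (fun i => x i * a) M hslice1 j,
      slice_core b hbli (fun i => a * x i) M hslice2 j⟩
  refine ⟨key, ?_⟩
  apply subset_closure
  exact Submodule.sum_mem _ fun i _ =>
    Submodule.subset_span ⟨x i, key i, b i, hb i, rfl⟩
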